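/- The set E₁ = {P₁((l,l)) : l ∈ ℕ} of 'tail' projections is itself an ultrafilter in the projection semilattice E: it is a filter, and any filter containing E₁ equals E₁. -/

import Mathlib

open ContinuousLinearMap
open scoped Classical

noncomputable section

namespace SOq

variable {H : Type} [NormedAddCommGroup H] [InnerProductSpace ℂ H] [CompleteSpace H]

/-- `pj A = 1 - A* A`; for the left shift this is the rank-one projection onto `e 0`. -/
def pj (A : H →L[ℂ] H) : H →L[ℂ] H := 1 - adjoint A * A

/-- `B₁(r,n,m) = S*^{n₁} S^{m₁} ⊗ S*^{n₁} S^{m₁} ⊗ t^r`, where `A`, `B'` are the shifts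
acting on the first, resp. second, tensor factor and `T' r` is `1 ⊗ 1 ⊗ t^r`. -/
def B1 (A B' : H →L[ℂ] H) (T' : ℤ → (H →L[ℂ] H)) (r : ℤ) (n m : ℕ × ℕ) : H →L[ℂ] H :=
  (adjoint A) ^ n.1 * A ^ m.1 * (adjoint B') ^ n.1 * B' ^ m.1 * T' r

/-- `B₂(r,n,m) = S*^{n₁} S^{m₁} ⊗ S*^{n₂} p S^{m₂} ⊗ t^r`. -/
def B2 (A B' : H →L[ℂ] H) (T' : ℤ → (H →L[ℂ] H)) (r : ℤ) (n m : ℕ × ℕ) : H →L[ℂ] H :=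
  (adjoint A) ^ n.1 * A ^ m.1 * (adjoint B') ^ n.2 * pj B' * B' ^ m.2 * T' r

/-- `B₃(r,n,m) = S*^{n₁} p S^{m₁} ⊗ S*^{n₂} S^{m₂} ⊗ t^r`. -/
def B3 (A B' : H →L[ℂ] H) (T' : ℤ → (H →L[ℂ] H)) (r : ℤ) (n m : ℕ × ℕ) : H →L[ℂ] H :=
  (adjoint A) ^ n.1 * pj A * A ^ m.1 * (adjoint B') ^ n.2 * B' ^ m.2 * T' r

/-- `B₄(r,n,m) = S*^{n₁} p S^{m₁} ⊗ S*^{n₂} p S^{m₂} ⊗ t^r`. -/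
def B4 (A B' : H →L[ℂ] H) (T' : ℤ → (H →L[ℂ] H)) (r : ℤ) (n m : ℕ × ℕ) : H →L[ℂ] H :=
  (adjoint A) ^ n.1 * pj A * A ^ m.1 * (adjoint B') ^ n.2 * pj B' * B' ^ m.2 * T' r

/-- `P_i(n) = B_i(0,n,n)`. -/
def P1 (A B' : H →L[ℂ] H) (T' : ℤ → (H →L[ℂ] H)) (n : ℕ × ℕ) : H →L[ℂ] H := B1 A B' T' 0 n n
def P2 (A B' : H →L[ℂ] H) (T' : ℤ → (H →L[ℂ] H)) (n : ℕ × ℕ) : H →L[ℂ] H := B2 A B' T' 0 n n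
def P3 (A B' : H →L[ℂ] H) (T' : ℤ → (H →L[ℂ] H)) (n : ℕ × ℕ) : H →L[ℂ] H := B3 A B' T' 0 n n
def P4 (A B' : H →L[ℂ] H) (T' : ℤ → (H →L[ℂ] H)) (n : ℕ × ℕ) : H →L[ℂ] H := B4 A B' T' 0 n n

/-- The hypotheses identifying `H` with `ℓ²(ℕ)⊗ℓ²(ℕ)⊗ℓ²(ℤ)` with orthonormal basis `e`,
`A = S⊗1⊗1`, `B' = 1⊗S⊗1` (left shifts) and `T' r = 1⊗1⊗t^r` (bilateral shift powers). -/
def ShiftHyp (e : HilbertBasis (ℕ × ℕ × ℤ) ℂ H) (A B' : H →L[ℂ] H)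
    (T' : ℤ → (H →L[ℂ] H)) : Prop :=
  (∀ (j : ℕ) (k : ℤ), A (e (0, j, k)) = 0) ∧
  (∀ (i j : ℕ) (k : ℤ), A (e (i + 1, j, k)) = e (i, j, k)) ∧
  (∀ (i : ℕ) (k : ℤ), B' (e (i, 0, k)) = 0) ∧
  (∀ (i j : ℕ) (k : ℤ), B' (e (i, j + 1, k)) = e (i, j, k)) ∧
  (∀ (r : ℤ) (i j : ℕ) (k : ℤ), T' r (e (i, j, k)) = e (i, j, k + r))

/-- The inverse semigroup `T`: zero together with all admissible words `B_i(r,n,m)`. -/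
def TSet (A B' : H →L[ℂ] H) (T' : ℤ → (H →L[ℂ] H)) : Set (H →L[ℂ] H) :=
  {0} ∪ {x | ∃ n m : ℕ × ℕ, x = B1 A B' T' ((m.1 : ℤ) - n.1) n m} ∪
  {x | ∃ n m : ℕ × ℕ, n.2 ≤ n.1 ∧ m.2 ≤ m.1 ∧ x = B2 A B' T' ((m.1 : ℤ) - n.1) n m} ∪
  {x | ∃ n m : ℕ × ℕ, n.1 ≤ n.2 ∧ m.1 ≤ m.2 ∧ x = B3 A B' T' ((m.2 : ℤ) - n.2) n m} ∪
  {x | ∃ (r : ℤ) (n m : ℕ × ℕ), x = B4 A B' T' r n m}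

/-- The projection semilattice `E` of `T`. -/
def ESet (A B' : H →L[ℂ] H) (T' : ℤ → (H →L[ℂ] H)) : Set (H →L[ℂ] H) :=
  {0} ∪ {x | ∃ n : ℕ, x = P1 A B' T' (n, n)} ∪
  {x | ∃ n : ℕ × ℕ, n.2 ≤ n.1 ∧ x = P2 A B' T' n} ∪
  {x | ∃ n : ℕ × ℕ, n.1 ≤ n.2 ∧ x = P3 A B' T' n} ∪
  {x | ∃ n : ℕ × ℕ, x = P4 A B' T' n}

/-- A filter in a semilattice-with-zero `E` of projections (`e ≤ f ↔ e * f = e`). -/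
def IsFilterIn {X : Type} [Ring X] (E A : Set X) : Prop :=
  A ⊆ E ∧ (0 : X) ∉ A ∧ (∀ a ∈ A, ∀ f ∈ E, a * f = a → f ∈ A) ∧ ∀ a ∈ A, ∀ b ∈ A, a * b ∈ A

/-- An ultrafilter: a maximal filter. -/
def IsUltrafilterIn {X : Type} [Ring X] (E A : Set X) : Prop :=
  IsFilterIn E A ∧ ∀ B, IsFilterIn E B → A ⊆ B → B = A

/-- `A_{Λ(k)}` for finite `k ∈ ℕ²`. -/
def ALamFin (A B' : H →L[ℂ] H) (T' : ℤ → (H →L[ℂ] H)) (k : ℕ × ℕ) : Set (H →L[ℂ] H) :=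
  {x | ∃ n : ℕ, n ≤ min k.1 k.2 ∧ x = P1 A B' T' (n, n)} ∪
  {x | ∃ n : ℕ × ℕ, n.2 = k.2 ∧ n.2 ≤ n.1 ∧ n.1 ≤ k.1 ∧ x = P2 A B' T' n} ∪
  {x | ∃ n : ℕ × ℕ, n.1 = k.1 ∧ n.1 ≤ n.2 ∧ n.2 ≤ k.2 ∧ x = P3 A B' T' n} ∪
  {P4 A B' T' k}

/-- `A_{Λ(k)}` for `k ∈ (ℕ∪{∞})²`, with `∞` encoded as `none`. -/
def ALam (A B' : H →L[ℂ] H) (T' : ℤ → (H →L[ℂ] H)) :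
    Option ℕ × Option ℕ → Set (H →L[ℂ] H) := fun k =>
  match k with
  | (some k1, some k2) => ALamFin A B' T' (k1, k2)
  | (some k1, none) =>
      {x | ∃ n : ℕ, n ≤ k1 ∧ x = P1 A B' T' (n, n)} ∪
      {x | ∃ l : ℕ, k1 ≤ l ∧ x = P3 A B' T' (k1, l)}
  | (none, some k2) =>
      {x | ∃ n : ℕ, n ≤ k2 ∧ x = P1 A B' T' (n, n)} ∪
      {x | ∃ l : ℕ, k2 ≤ l ∧ x = P2 A B' T' (l, k2)}
  | (none, none) => {x | ∃ l : ℕ, x = P1 A B' T' (l, l)}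

/-- The character (indicator function) of a subset. -/
def charOf {X : Type} (s : Set X) : X → Bool := fun x => decide (x ∈ s)

/-- Characters on `E`: nonzero multiplicative `{0,1}`-valued maps killing `0`. -/
def IsChar {X : Type} [Ring X] (E : Set X) (x : X → Bool) : Prop :=
  (∃ a ∈ E, x a = true) ∧ x 0 = false ∧ ∀ a ∈ E, ∀ b ∈ E, x (a * b) = (x a && x b)

/-- `n ≤ k` for `n : ℕ` and `k ∈ ℕ∪{∞}` (`∞ = none`). -/
def leO (n : ℕ) (k : Option ℕ) : Prop := ∀ m : ℕ, k = some m → n ≤ m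

/-- The domain set `D_s = {x ∈ Ê_tight : x(s s*) = 1}` (tight = ultrafilter characters). -/
def Dset (A B' : H →L[ℂ] H) (T' : ℤ → (H →L[ℂ] H)) (s : H →L[ℂ] H) :
    Set ((H →L[ℂ] H) → Bool) :=
  {x | (∃ Aset, IsUltrafilterIn (ESet A B' T') Aset ∧ x = charOf Aset) ∧
    x (s * adjoint s) = true}

section Helpers

variable (e : HilbertBasis (ℕ × ℕ × ℤ) ℂ H) (A B' : H →L[ℂ] H) (T' : ℤ → (H →L[ℂ] H))

lemma ext_basis {f g : H →L[ℂ] H} (h : ∀ n, f (e n) = g (e n)) : f = g := by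
  refine ContinuousLinearMap.ext_on
    (Submodule.dense_iff_topologicalClosure_eq_top.mpr e.dense_span) ?_
  rintro x ⟨n, rfl⟩; exact h n

lemma inner_ext {x y : H} (h : ∀ n, (inner ℂ (e n) x : ℂ) = inner ℂ (e n) y) : x = y := by
  apply e.repr.injective
  ext n
  rw [e.repr_apply_apply, e.repr_apply_apply]
  exact h n

variable (hyp : ShiftHyp e A B' T')
include hyp

lemma adjA (i j : ℕ) (k : ℤ) : adjoint A (e (i, j, k)) = e (i + 1, j, k) := by
  apply inner_ext e
  rintro ⟨a, b, c⟩
  rw [ContinuousLinearMap.adjoint_inner_right]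
  rcases a with _ | a
  · rw [hyp.1 b c, inner_zero_left, orthonormal_iff_ite.mp e.orthonormal]
    simp [Prod.ext_iff]
  · rw [hyp.2.1 a b c, orthonormal_iff_ite.mp e.orthonormal,
      orthonormal_iff_ite.mp e.orthonormal]
    simp [Prod.ext_iff]

lemma adjB (i j : ℕ) (k : ℤ) : adjoint B' (e (i, j, k)) = e (i, j + 1, k) := by
  apply inner_ext e
  rintro ⟨a, b, c⟩
  rw [ContinuousLinearMap.adjoint_inner_right]
  rcases b with _ | b
  · rw [hyp.2.2.1 a c, inner_zero_left, orthonormal_iff_ite.mp e.orthonormal]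
    simp [Prod.ext_iff]
  · rw [hyp.2.2.2.1 a b c, orthonormal_iff_ite.mp e.orthonormal,
      orthonormal_iff_ite.mp e.orthonormal]
    simp [Prod.ext_iff]

lemma Apow (m i j : ℕ) (k : ℤ) :
    (A ^ m) (e (i, j, k)) = if m ≤ i then e (i - m, j, k) else 0 := by
  induction m generalizing i with
  | zero => simp
  | succ m ih =>
    rw [pow_succ, ContinuousLinearMap.mul_apply]
    rcases i with _ | i
    · rw [hyp.1 j k, map_zero]
      simp
    · rw [hyp.2.1 i j k, ih i]
      simp [Nat.succ_le_succ_iff, Nat.succ_sub_succ]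

lemma Bpow (m i j : ℕ) (k : ℤ) :
    (B' ^ m) (e (i, j, k)) = if m ≤ j then e (i, j - m, k) else 0 := by
  induction m generalizing j with
  | zero => simp
  | succ m ih =>
    rw [pow_succ, ContinuousLinearMap.mul_apply]
    rcases j with _ | j
    · rw [hyp.2.2.1 i k, map_zero]
      simp
    · rw [hyp.2.2.2.1 i j k, ih j]
      simp [Nat.succ_le_succ_iff, Nat.succ_sub_succ]

lemma adjApow (m i j : ℕ) (k : ℤ) :
    ((adjoint A) ^ m) (e (i, j, k)) = e (i + m, j, k) := by
  induction m generalizing i with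
  | zero => simp
  | succ m ih =>
    rw [pow_succ, ContinuousLinearMap.mul_apply, adjA e A B' T' hyp, ih]
    have h : i + 1 + m = i + (m + 1) := by omega
    rw [h]

lemma adjBpow (m i j : ℕ) (k : ℤ) :
    ((adjoint B') ^ m) (e (i, j, k)) = e (i, j + m, k) := by
  induction m generalizing j with
  | zero => simp
  | succ m ih =>
    rw [pow_succ, ContinuousLinearMap.mul_apply, adjB e A B' T' hyp, ih]
    have h : j + 1 + m = j + (m + 1) := by omega
    rw [h]

lemma pjA_app (i j : ℕ) (k : ℤ) :
    pj A (e (i, j, k)) = if i = 0 then e (i, j, k) else 0 := by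
  rw [pj, ContinuousLinearMap.sub_apply, ContinuousLinearMap.one_apply,
    ContinuousLinearMap.mul_apply]
  rcases i with _ | i
  · rw [hyp.1 j k, map_zero, sub_zero, if_pos rfl]
  · rw [hyp.2.1 i j k, adjA e A B' T' hyp, sub_self, if_neg (Nat.succ_ne_zero i)]

lemma pjB_app (i j : ℕ) (k : ℤ) :
    pj B' (e (i, j, k)) = if j = 0 then e (i, j, k) else 0 := by
  rw [pj, ContinuousLinearMap.sub_apply, ContinuousLinearMap.one_apply,
    ContinuousLinearMap.mul_apply]
  rcases j with _ | j
  · rw [hyp.2.2.1 i k, map_zero, sub_zero, if_pos rfl]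
  · rw [hyp.2.2.2.1 i j k, adjB e A B' T' hyp, sub_self, if_neg (Nat.succ_ne_zero j)]

lemma P1app (l i j : ℕ) (k : ℤ) :
    P1 A B' T' (l, l) (e (i, j, k)) = if l ≤ i ∧ l ≤ j then e (i, j, k) else 0 := by
  rw [P1, B1]
  simp only [ContinuousLinearMap.mul_apply]
  rw [hyp.2.2.2.2 0 i j k, add_zero, Bpow e A B' T' hyp]
  by_cases hj : l ≤ j
  · rw [if_pos hj, adjBpow e A B' T' hyp, Nat.sub_add_cancel hj,
      Apow e A B' T' hyp]
    by_cases hi : l ≤ i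
    · rw [if_pos hi, adjApow e A B' T' hyp, Nat.sub_add_cancel hi,
        if_pos ⟨hi, hj⟩]
    · rw [if_neg hi, map_zero, if_neg (by tauto)]
  · rw [if_neg hj, map_zero, map_zero, map_zero, if_neg (by tauto)]

lemma P2app (n : ℕ × ℕ) (i j : ℕ) (k : ℤ) :
    P2 A B' T' n (e (i, j, k)) = if n.1 ≤ i ∧ j = n.2 then e (i, j, k) else 0 := by
  rw [P2, B2]
  simp only [ContinuousLinearMap.mul_apply]
  rw [hyp.2.2.2.2 0 i j k, add_zero, Bpow e A B' T' hyp]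
  by_cases hj : n.2 ≤ j
  · rw [if_pos hj, pjB_app e A B' T' hyp]
    by_cases hj0 : j - n.2 = 0
    · have hj' : j = n.2 := by omega
      have hjj : j - n.2 + n.2 = j := by omega
      rw [if_pos hj0, adjBpow e A B' T' hyp, hjj, Apow e A B' T' hyp]
      by_cases hi : n.1 ≤ i
      · rw [if_pos hi, adjApow e A B' T' hyp, Nat.sub_add_cancel hi,
          if_pos ⟨hi, hj'⟩]
      · rw [if_neg hi, map_zero, if_neg (by tauto)]
    · rw [if_neg hj0, map_zero, map_zero, map_zero, if_neg (by omega)]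
  · rw [if_neg hj, map_zero, map_zero, map_zero, map_zero, if_neg (by omega)]

lemma P3app (n : ℕ × ℕ) (i j : ℕ) (k : ℤ) :
    P3 A B' T' n (e (i, j, k)) = if i = n.1 ∧ n.2 ≤ j then e (i, j, k) else 0 := by
  rw [P3, B3]
  simp only [ContinuousLinearMap.mul_apply]
  rw [hyp.2.2.2.2 0 i j k, add_zero, Bpow e A B' T' hyp]
  by_cases hj : n.2 ≤ j
  · rw [if_pos hj, adjBpow e A B' T' hyp, Nat.sub_add_cancel hj,
      Apow e A B' T' hyp]
    by_cases hi : n.1 ≤ i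
    · rw [if_pos hi, pjA_app e A B' T' hyp]
      by_cases hi0 : i - n.1 = 0
      · have hi' : i = n.1 := by omega
        have hii : i - n.1 + n.1 = i := by omega
        rw [if_pos hi0, adjApow e A B' T' hyp, hii, if_pos ⟨hi', hj⟩]
      · rw [if_neg hi0, map_zero, if_neg (by omega)]
    · rw [if_neg hi, map_zero, map_zero, if_neg (by omega)]
  · rw [if_neg hj, map_zero, map_zero, map_zero, map_zero, if_neg (by tauto)]

lemma P4app (n : ℕ × ℕ) (i j : ℕ) (k : ℤ) :
    P4 A B' T' n (e (i, j, k)) = if i = n.1 ∧ j = n.2 then e (i, j, k) else 0 := by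
  rw [P4, B4]
  simp only [ContinuousLinearMap.mul_apply]
  rw [hyp.2.2.2.2 0 i j k, add_zero, Bpow e A B' T' hyp]
  by_cases hj : n.2 ≤ j
  · rw [if_pos hj, pjB_app e A B' T' hyp]
    by_cases hj0 : j - n.2 = 0
    · have hj' : j = n.2 := by omega
      have hjj : j - n.2 + n.2 = j := by omega
      rw [if_pos hj0, adjBpow e A B' T' hyp, hjj, Apow e A B' T' hyp]
      by_cases hi : n.1 ≤ i
      · rw [if_pos hi, pjA_app e A B' T' hyp]
        by_cases hi0 : i - n.1 = 0
        · have hi' : i = n.1 := by omega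
          have hii : i - n.1 + n.1 = i := by omega
          rw [if_pos hi0, adjApow e A B' T' hyp, hii, if_pos ⟨hi', hj'⟩]
        · rw [if_neg hi0, map_zero, if_neg (by omega)]
      · rw [if_neg hi, map_zero, map_zero, if_neg (by omega)]
    · rw [if_neg hj0, map_zero, map_zero, map_zero, map_zero, if_neg (by omega)]
  · rw [if_neg hj, map_zero, map_zero, map_zero, map_zero, map_zero,
      if_neg (by omega)]

lemma P1ne (l : ℕ) : P1 A B' T' (l, l) ≠ 0 := by
  intro h
  have h1 := P1app e A B' T' hyp l l l 0
  rw [h, if_pos ⟨le_refl l, le_refl l⟩] at h1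
  exact e.orthonormal.ne_zero (l, l, 0) (by simpa using h1.symm)

lemma P1P1 (l m : ℕ) :
    P1 A B' T' (l, l) * P1 A B' T' (m, m) = P1 A B' T' (max l m, max l m) := by
  apply ext_basis e
  rintro ⟨i, j, k⟩
  rw [ContinuousLinearMap.mul_apply, P1app e A B' T' hyp, P1app e A B' T' hyp]
  by_cases h : m ≤ i ∧ m ≤ j
  · rw [if_pos h, P1app e A B' T' hyp]
    by_cases h' : l ≤ i ∧ l ≤ j
    · rw [if_pos h', if_pos (by omega)]
    · rw [if_neg h', if_neg (by omega)]
  · rw [if_neg h, map_zero, if_neg (by omega)]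

lemma P1P2 (n : ℕ × ℕ) (M : ℕ) (hM : n.2 < M) :
    P1 A B' T' (M, M) * P2 A B' T' n = 0 := by
  apply ext_basis e
  rintro ⟨i, j, k⟩
  rw [ContinuousLinearMap.mul_apply, P2app e A B' T' hyp,
    ContinuousLinearMap.zero_apply]
  by_cases h : n.1 ≤ i ∧ j = n.2
  · rw [if_pos h, P1app e A B' T' hyp, if_neg (by omega)]
  · rw [if_neg h, map_zero]

lemma P1P3 (n : ℕ × ℕ) (M : ℕ) (hM : n.1 < M) :
    P1 A B' T' (M, M) * P3 A B' T' n = 0 := by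
  apply ext_basis e
  rintro ⟨i, j, k⟩
  rw [ContinuousLinearMap.mul_apply, P3app e A B' T' hyp,
    ContinuousLinearMap.zero_apply]
  by_cases h : i = n.1 ∧ n.2 ≤ j
  · rw [if_pos h, P1app e A B' T' hyp, if_neg (by omega)]
  · rw [if_neg h, map_zero]

lemma P1P4 (n : ℕ × ℕ) (M : ℕ) (hM : n.1 < M) :
    P1 A B' T' (M, M) * P4 A B' T' n = 0 := by
  apply ext_basis e
  rintro ⟨i, j, k⟩
  rw [ContinuousLinearMap.mul_apply, P4app e A B' T' hyp,
    ContinuousLinearMap.zero_apply]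
  by_cases h : i = n.1 ∧ j = n.2
  · rw [if_pos h, P1app e A B' T' hyp, if_neg (by omega)]
  · rw [if_neg h, map_zero]

end Helpers

theorem stmt9 {H : Type} [NormedAddCommGroup H] [InnerProductSpace ℂ H]
    [CompleteSpace H] (e : HilbertBasis (ℕ × ℕ × ℤ) ℂ H) (A B' : H →L[ℂ] H)
    (T' : ℤ → (H →L[ℂ] H)) (hyp : ShiftHyp e A B' T') :
    IsFilterIn (ESet A B' T') (ALam A B' T' (none, none)) ∧
    ∀ B, IsFilterIn (ESet A B' T') B → ALam A B' T' (none, none) ⊆ B →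
      B = ALam A B' T' (none, none) := by
  have hA : ALam A B' T' (none, none) = {x | ∃ l : ℕ, x = P1 A B' T' (l, l)} := rfl
  rw [hA]
  have hne := P1ne e A B' T' hyp
  have hkill : ∀ x ∈ ESet A B' T', (∀ l : ℕ, x ≠ P1 A B' T' (l, l)) → x ≠ 0 →
      ∃ M : ℕ, ∀ N, M ≤ N → P1 A B' T' (N, N) * x = 0 := by
    intro x hx hnp hx0
    rcases hx with ((((hx | hx) | hx) | hx) | hx)
    · exact absurd hx hx0
    · obtain ⟨n, rfl⟩ := hx
      exact absurd rfl (hnp n)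
    · obtain ⟨n, hn, rfl⟩ := hx
      exact ⟨n.2 + 1, fun N hN => P1P2 e A B' T' hyp n N (by omega)⟩
    · obtain ⟨n, hn, rfl⟩ := hx
      exact ⟨n.1 + 1, fun N hN => P1P3 e A B' T' hyp n N (by omega)⟩
    · obtain ⟨n, rfl⟩ := hx
      exact ⟨n.1 + 1, fun N hN => P1P4 e A B' T' hyp n N (by omega)⟩
  constructor
  · refine ⟨?_, ?_, ?_, ?_⟩
    · rintro x ⟨l, rfl⟩
      exact Or.inl (Or.inl (Or.inl (Or.inr ⟨l, rfl⟩)))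
    · rintro ⟨l, h⟩
      exact hne l h.symm
    · rintro a ⟨l, rfl⟩ f hf hmul
      by_contra hnf
      simp only [Set.mem_setOf_eq, not_exists] at hnf
      by_cases hf0 : f = 0
      · subst hf0
        rw [mul_zero] at hmul
        exact hne l hmul.symm
      obtain ⟨M, hM⟩ := hkill f hf (fun m hm => hnf m hm) hf0
      have h1 : P1 A B' T' (max M l, max M l) * (P1 A B' T' (l, l) * f)
          = P1 A B' T' (max M l, max M l) := by
        rw [hmul, P1P1 e A B' T' hyp, max_eq_left (le_max_right M l)]
      have h2 : P1 A B' T' (max M l, max M l) * (P1 A B' T' (l, l) * f) = 0 := by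
        rw [← mul_assoc, P1P1 e A B' T' hyp, max_eq_left (le_max_right M l),
          hM (max M l) (le_max_left M l)]
      exact hne (max M l) (by rw [← h1, h2])
    · rintro a ⟨l, rfl⟩ b ⟨m, rfl⟩
      exact ⟨max l m, P1P1 e A B' T' hyp l m⟩
  · intro B hB hBsub
    apply Set.Subset.antisymm _ hBsub
    intro b hb
    have hbE := hB.1 hb
    by_contra hnb
    simp only [Set.mem_setOf_eq, not_exists] at hnb
    have hb0 : b ≠ 0 := fun h => hB.2.1 (h ▸ hb)
    obtain ⟨M, hM⟩ := hkill b hbE (fun m hm => hnb m hm) hb0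
    have hmem : P1 A B' T' (M, M) * b ∈ B :=
      hB.2.2.2 _ (hBsub ⟨M, rfl⟩) _ hb
    rw [hM M le_rfl] at hmem
    exact hB.2.1 hmem

end SOq
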